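/- The Y-Delta transformation preserves the response matrix: Let (G,c) be a network with node set N and internal vertices I, and suppose v₀ ∈ I has exactly three neighbors, the distinct vertices v₁, v₂, v₃, joined to v₀ by edges of conductances c₁, c₂, c₃ > 0. Let (G',c') be the network on vertex set V∖{v₀} obtained by deleting v₀ and its edges and, for each pair {i,j} ⊆ {1,2,3}, increasing the conductance between v_i and v_j by c_i c_j/(c₁+c₂+c₃) (adding the edge v_i v_j if it was not present). Then G' is connected, and the response matrix of (G',c') with node set N equals the response matrix of (G,c) with node set N. -/

import Mathlib

open Matrix BigOperators

/-- The Laplacian of a network given by a symmetric conductance function `c`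
(zero on the diagonal and on non-edges): `Δ v v' = -c v v'` off the diagonal
and `Δ v v = ∑_{v'} c v v'` on the diagonal. -/
noncomputable def netLap {V : Type*} [Fintype V] [DecidableEq V] (c : V → V → ℝ) :
    Matrix V V ℝ :=
  Matrix.of fun v w => if v = w then ∑ u, c v u else -c v w

/-- The response matrix `L = -A + B C⁻¹ Bᵀ` of a network with node set `N`. -/
noncomputable def respMat {V : Type*} [Fintype V] [DecidableEq V]
    (c : V → V → ℝ) (N : Finset V) : Matrix {v : V // v ∈ N} {v : V // v ∈ N} ℝ :=
  -(netLap c).submatrix (Subtype.val : {v : V // v ∈ N} → V)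
      (Subtype.val : {v : V // v ∈ N} → V)
    + (netLap c).submatrix (Subtype.val : {v : V // v ∈ N} → V)
        (Subtype.val : {v : V // v ∉ N} → V)
      * ((netLap c).submatrix (Subtype.val : {v : V // v ∉ N} → V)
          (Subtype.val : {v : V // v ∉ N} → V))⁻¹
      * ((netLap c).submatrix (Subtype.val : {v : V // v ∈ N} → V)
          (Subtype.val : {v : V // v ∉ N} → V))ᵀ


section YDeltaAux
set_option linter.unusedSectionVars false
variable {V : Type*} [Fintype V] [DecidableEq V]

lemma sum_split (p : V → Prop) [DecidablePred p] (g : V → ℝ) :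
    ∑ v, g v = (∑ x : {v // p v}, g x.1) + ∑ x : {v // ¬ p v}, g x.1 :=
  (Fintype.sum_subtype_add_sum_subtype p g).symm

lemma mulVec_eq (c : V → V → ℝ) (hdiag : ∀ v, c v v = 0) (w : V → ℝ) (v : V) :
    (netLap c).mulVec w v = ∑ u, c v u * (w v - w u) := by
  simp only [Matrix.mulVec, dotProduct, netLap, Matrix.of_apply]
  have h : ∀ u, (if v = u then ∑ u, c v u else -c v u) * w u
      = (if v = u then (∑ u, c v u) * w u else 0) - c v u * w u := by
    intro u; split
    · next h => subst h; rw [hdiag]; ring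
    · ring
  rw [Finset.sum_congr rfl fun u _ => h u, Finset.sum_sub_distrib,
    Finset.sum_ite_eq Finset.univ v]
  simp only [Finset.mem_univ, if_true]
  rw [Finset.sum_mul, ← Finset.sum_sub_distrib]
  exact Finset.sum_congr rfl fun u _ => by ring

lemma walk_const {G : SimpleGraph V} {f : V → ℝ} (hf : ∀ a b, G.Adj a b → f a = f b) :
    ∀ {a b : V}, G.Walk a b → f a = f b := by
  intro a b p
  induction p with
  | nil => rfl
  | cons h _ ih => exact (hf _ _ h).trans ih

lemma dirichlet_det_ne_zero (c : V → V → ℝ) (N : Finset V)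
    (hsymm : ∀ v w, c v w = c w v)
    (hnonneg : ∀ v w, 0 ≤ c v w)
    (hdiag : ∀ v, c v v = 0)
    (hconn : (SimpleGraph.fromRel fun v w : V => c v w ≠ 0).Connected)
    (hN : N.Nonempty) :
    ((netLap c).submatrix (Subtype.val : {v : V // v ∉ N} → V)
      (Subtype.val : {v : V // v ∉ N} → V)).det ≠ 0 := by
  rw [Ne, ← Matrix.exists_mulVec_eq_zero_iff]
  rintro ⟨x, hx0, hx⟩
  set w : V → ℝ := fun v => if h : v ∉ N then x ⟨v, h⟩ else 0 with hw
  have hwN : ∀ v ∈ N, w v = 0 := fun v hv => dif_neg (not_not.mpr hv)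
  have hwI : ∀ (v) (h : v ∉ N), w v = x ⟨v, h⟩ := fun v h => dif_pos h
  have step1 : ∀ (v) (h : v ∉ N), (netLap c).mulVec w v = 0 := by
    intro v h
    have : (netLap c).mulVec w v
        = ((netLap c).submatrix (Subtype.val : {v : V // v ∉ N} → V) Subtype.val).mulVec x
          ⟨v, h⟩ := by
      simp only [Matrix.mulVec, dotProduct, Matrix.submatrix_apply]
      rw [sum_split (fun u => u ∉ N) (fun u => netLap c v u * w u)]
      have h2 : ∀ u : {u : V // ¬ u ∉ N}, netLap c v u.1 * w u.1 = 0 := by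
        intro u; rw [hwN u.1 (not_not.mp u.2), mul_zero]
      rw [Finset.sum_congr rfl fun u _ => h2 u, Finset.sum_const_zero, add_zero]
      exact Finset.sum_congr rfl fun u _ => by rw [hwI u.1 u.2]
    rw [this, hx, Pi.zero_apply]
  -- quadratic form
  have hA : ∀ v, ∑ u, c v u * (w v - w u) * w v = w v * (netLap c).mulVec w v := by
    intro v; rw [mulVec_eq c hdiag, Finset.mul_sum]
    exact Finset.sum_congr rfl fun u _ => by ring
  have hS : ∑ v, ∑ u, c v u * (w v - w u) ^ 2 = 0 := by
    have key : ∀ v u, c v u * (w v - w u) ^ 2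
        = c v u * (w v - w u) * w v + c u v * (w u - w v) * w u := by
      intro v u; rw [hsymm v u]; ring
    have : ∑ v, ∑ u, c v u * (w v - w u) ^ 2
        = (∑ v, ∑ u, c v u * (w v - w u) * w v) + ∑ v, ∑ u, c u v * (w u - w v) * w u := by
      rw [← Finset.sum_add_distrib]
      exact Finset.sum_congr rfl fun v _ => by
        rw [← Finset.sum_add_distrib]
        exact Finset.sum_congr rfl fun u _ => key v u
    rw [this, Finset.sum_comm (f := fun v u => c u v * (w u - w v) * w u)]
    have e : ∀ g : V → ℝ, (∀ v (h : v ∉ N), g v = 0) → (∀ v ∈ N, g v = 0) → ∑ v, g v = 0 := by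
      intro g h1 h2
      exact Finset.sum_eq_zero fun v _ => by
        by_cases h : v ∉ N
        · exact h1 v h
        · exact h2 v (not_not.mp h)
    have z : ∑ v, w v * (netLap c).mulVec w v = 0 := by
      refine e _ (fun v h => ?_) (fun v h => ?_)
      · rw [step1 v h, mul_zero]
      · rw [hwN v h, zero_mul]
    rw [Finset.sum_congr rfl fun v _ => hA v, z]
    norm_num
  have hterm : ∀ v u, c v u ≠ 0 → w v = w u := by
    intro v u hc
    have h1 : ∀ v ∈ (Finset.univ : Finset V), 0 ≤ ∑ u, c v u * (w v - w u) ^ 2 := by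
      intro v _
      exact Finset.sum_nonneg fun u _ => mul_nonneg (hnonneg v u) (sq_nonneg _)
    have h2 := (Finset.sum_eq_zero_iff_of_nonneg h1).mp hS v (Finset.mem_univ v)
    have h3 : ∀ u ∈ (Finset.univ : Finset V), 0 ≤ c v u * (w v - w u) ^ 2 :=
      fun u _ => mul_nonneg (hnonneg v u) (sq_nonneg _)
    have h4 := (Finset.sum_eq_zero_iff_of_nonneg h3).mp h2 u (Finset.mem_univ u)
    rcases mul_eq_zero.mp h4 with h | h
    · exact absurd h hc
    · exact sub_eq_zero.mp ((pow_eq_zero_iff two_ne_zero).mp h)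
  have hadj : ∀ a b, (SimpleGraph.fromRel fun v w : V => c v w ≠ 0).Adj a b → w a = w b := by
    intro a b hab
    rw [SimpleGraph.fromRel_adj] at hab
    rcases hab.2 with h | h
    · exact hterm a b h
    · exact (hterm b a h).symm
  obtain ⟨n₀, hn₀⟩ := hN
  have hzero : ∀ v, w v = 0 := by
    intro v
    obtain ⟨p⟩ := hconn.preconnected v n₀
    rw [walk_const hadj p]
    exact hwN n₀ hn₀
  apply hx0
  funext i
  have := hzero i.1
  rw [hwI i.1 i.2] at this
  simpa using this

lemma netLap_symm (c : V → V → ℝ) (hsymm : ∀ v w, c v w = c w v) (a b : V) :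
    netLap c a b = netLap c b a := by
  simp only [netLap, Matrix.of_apply]
  by_cases h : a = b
  · subst h; rfl
  · rw [if_neg h, if_neg (Ne.symm h), hsymm]

lemma respMat_apply (c : V → V → ℝ) (N : Finset V)
    (hsymm : ∀ v w, c v w = c w v)
    (hC : ((netLap c).submatrix (Subtype.val : {v : V // v ∉ N} → V)
      (Subtype.val : {v : V // v ∉ N} → V)).det ≠ 0)
    (j : {v : V // v ∈ N}) (w : V → ℝ)
    (hwN : ∀ (v) (h : v ∈ N), w v = if (⟨v, h⟩ : {v : V // v ∈ N}) = j then 1 else 0)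
    (hharm : ∀ (v) (h : v ∉ N), (netLap c).mulVec w v = 0)
    (i : {v : V // v ∈ N}) :
    respMat c N i j = -((netLap c).mulVec w i.1) := by
  set A := (netLap c).submatrix (Subtype.val : {v : V // v ∈ N} → V)
      (Subtype.val : {v : V // v ∈ N} → V) with hA
  set B := (netLap c).submatrix (Subtype.val : {v : V // v ∈ N} → V)
      (Subtype.val : {v : V // v ∉ N} → V) with hB
  set C := (netLap c).submatrix (Subtype.val : {v : V // v ∉ N} → V)
      (Subtype.val : {v : V // v ∉ N} → V) with hCc
  set f : {v : V // v ∈ N} → ℝ := fun x => w x.1 with hf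
  set u : {v : V // v ∉ N} → ℝ := fun x => w x.1 with hu
  have hsingle : ∀ (M : Matrix {v : V // v ∈ N} {v : V // v ∈ N} ℝ) (i),
      M.mulVec f i = M i j := by
    intro M i
    simp only [Matrix.mulVec, dotProduct, hf]
    rw [Finset.sum_congr rfl (fun y _ => by
      rw [hwN y.1 y.2]
      simp only [Subtype.coe_eta]
      split <;> simp : ∀ y ∈ Finset.univ, M i y * w y.1 = if y = j then M i y else 0)]
    rw [Finset.sum_ite_eq' Finset.univ j fun y => M i y]
    simp
  -- split of mulVec
  have hsplitv : ∀ v : V, (netLap c).mulVec w v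
      = (∑ y : {v : V // v ∈ N}, netLap c v y.1 * f y)
        + ∑ y : {v : V // v ∉ N}, netLap c v y.1 * u y := by
    intro v
    simp only [Matrix.mulVec, dotProduct]
    rw [sum_split (fun u => u ∈ N) (fun y => netLap c v y * w y)]
    congr 1 <;>
      exact Finset.sum_congr (by congr 1; exact Subsingleton.elim _ _) fun _ _ => rfl
  have hCu : C.mulVec u = -(Bᵀ.mulVec f) := by
    funext x
    have h0 := hharm x.1 x.2
    rw [hsplitv] at h0
    have e1 : Bᵀ.mulVec f x = ∑ y : {v : V // v ∈ N}, netLap c x.1 y.1 * f y := by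
      simp only [Matrix.mulVec, dotProduct, Matrix.transpose_apply, hB, Matrix.submatrix_apply]
      exact Finset.sum_congr rfl fun y _ => by rw [netLap_symm c hsymm]
    have e2 : C.mulVec u x = ∑ y : {v : V // v ∉ N}, netLap c x.1 y.1 * u y := by
      simp only [Matrix.mulVec, dotProduct, hCc, Matrix.submatrix_apply]
    rw [Pi.neg_apply, e1, e2]
    linarith [h0]
  have huf : u = -(C⁻¹.mulVec (Bᵀ.mulVec f)) := by
    have h1 : C⁻¹.mulVec (C.mulVec u) = u := by
      rw [Matrix.mulVec_mulVec, Matrix.nonsing_inv_mul C (isUnit_iff_ne_zero.mpr hC),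
        Matrix.one_mulVec]
    rw [← h1, hCu, Matrix.mulVec_neg]
  have hmain : (netLap c).mulVec w i.1 = A i j - (B * C⁻¹ * Bᵀ) i j := by
    rw [hsplitv]
    have e1 : (∑ y : {v : V // v ∈ N}, netLap c i.1 y.1 * f y) = A.mulVec f i := by
      simp only [Matrix.mulVec, dotProduct, hA, Matrix.submatrix_apply]
    have e2 : (∑ y : {v : V // v ∉ N}, netLap c i.1 y.1 * u y) = B.mulVec u i := by
      simp only [Matrix.mulVec, dotProduct, hB, Matrix.submatrix_apply]
    rw [e1, e2, huf, Matrix.mulVec_neg, Matrix.mulVec_mulVec, Matrix.mulVec_mulVec,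
      hsingle A i, Pi.neg_apply, hsingle (B * C⁻¹ * Bᵀ) i]
    ring
  rw [hmain]
  simp only [respMat, Matrix.add_apply, Matrix.neg_apply, ← hA, ← hB, ← hCc]
  ring

lemma exists_harmonic (c : V → V → ℝ) (N : Finset V)
    (hC : ((netLap c).submatrix (Subtype.val : {v : V // v ∉ N} → V)
      (Subtype.val : {v : V // v ∉ N} → V)).det ≠ 0)
    (j : {v : V // v ∈ N}) :
    ∃ w : V → ℝ,
      (∀ (v) (h : v ∈ N), w v = if (⟨v, h⟩ : {v : V // v ∈ N}) = j then 1 else 0) ∧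
      ∀ (v) (h : v ∉ N), (netLap c).mulVec w v = 0 := by
  set f : {v : V // v ∈ N} → ℝ := fun x => if x = j then 1 else 0 with hf
  set Bt := (netLap c).submatrix (Subtype.val : {v : V // v ∉ N} → V)
      (Subtype.val : {v : V // v ∈ N} → V) with hBt
  set C := (netLap c).submatrix (Subtype.val : {v : V // v ∉ N} → V)
      (Subtype.val : {v : V // v ∉ N} → V) with hCm
  set u : {v : V // v ∉ N} → ℝ := -(C⁻¹.mulVec (Bt.mulVec f)) with hu
  set w : V → ℝ := fun v => if h : v ∈ N then f ⟨v, h⟩ else u ⟨v, h⟩ with hw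
  refine ⟨w, fun v h => by simp only [hw, dif_pos h, hf], fun v h => ?_⟩
  have hsplit : (netLap c).mulVec w v
      = (∑ y : {v : V // v ∈ N}, netLap c v y.1 * w y.1)
        + ∑ y : {v : V // v ∉ N}, netLap c v y.1 * w y.1 := by
    simp only [Matrix.mulVec, dotProduct]
    rw [sum_split (fun u => u ∈ N) (fun y => netLap c v y * w y)]
    congr 1 <;>
      exact Finset.sum_congr (by congr 1; exact Subsingleton.elim _ _) fun _ _ => rfl
  have e1 : (∑ y : {v : V // v ∈ N}, netLap c v y.1 * w y.1) = Bt.mulVec f ⟨v, h⟩ := by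
    simp only [Matrix.mulVec, dotProduct, hBt, Matrix.submatrix_apply]
    refine Finset.sum_congr rfl fun y _ => ?_
    rw [show w y.1 = f y by simp only [hw, dif_pos y.2, Subtype.coe_eta]]
  have e2 : (∑ y : {v : V // v ∉ N}, netLap c v y.1 * w y.1) = C.mulVec u ⟨v, h⟩ := by
    simp only [Matrix.mulVec, dotProduct, hCm, Matrix.submatrix_apply]
    refine Finset.sum_congr rfl fun y _ => ?_
    rw [show w y.1 = u y by simp only [hw, dif_neg y.2, Subtype.coe_eta]]
  have e3 : C.mulVec u = -(Bt.mulVec f) := by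
    rw [hu, Matrix.mulVec_neg, Matrix.mulVec_mulVec,
      Matrix.mul_nonsing_inv C (isUnit_iff_ne_zero.mpr hC), Matrix.one_mulVec]
  rw [hsplit, e1, e2, e3, Pi.neg_apply]
  ring

lemma finset_pair_eq {a b x y : V} :
    ({a, b} : Finset V) = {x, y} ↔ (a = x ∧ b = y) ∨ (a = y ∧ b = x) := by
  rw [← Finset.coe_inj]
  simp only [Finset.coe_insert, Finset.coe_singleton]
  exact Set.pair_eq_pair_iff

section YD
variable (c : V → V → ℝ) (v₀ v₁ v₂ v₃ : V)

/-- abbreviation for the added delta conductances -/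
noncomputable def Eadd (σ : ℝ) : V → V → ℝ := fun a b =>
  if ({a, b} : Finset V) = {v₁, v₂} then c v₀ v₁ * c v₀ v₂ / σ
  else if ({a, b} : Finset V) = {v₁, v₃} then c v₀ v₁ * c v₀ v₃ / σ
  else if ({a, b} : Finset V) = {v₂, v₃} then c v₀ v₂ * c v₀ v₃ / σ
  else 0

variable {c v₀ v₁ v₂ v₃}

lemma Eadd_symm (σ : ℝ) (a b : V) : Eadd c v₀ v₁ v₂ v₃ σ a b = Eadd c v₀ v₁ v₂ v₃ σ b a := by
  simp only [Eadd, Finset.pair_comm a b]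

lemma Eadd_diag (σ : ℝ) (h12 : v₁ ≠ v₂) (h13 : v₁ ≠ v₃) (h23 : v₂ ≠ v₃) (a : V) :
    Eadd c v₀ v₁ v₂ v₃ σ a a = 0 := by
  have hcard : ∀ x y : V, x ≠ y → ({a, a} : Finset V) ≠ {x, y} := by
    intro x y hxy h
    have h2 := congrArg Finset.card h
    rw [Finset.card_pair hxy] at h2
    simp at h2
  simp only [Eadd, if_neg (hcard _ _ h12), if_neg (hcard _ _ h13), if_neg (hcard _ _ h23)]

lemma Eadd_nonneg (σ : ℝ) (hσ : 0 ≤ σ) (hnonneg : ∀ v w, 0 ≤ c v w) (a b : V) :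
    0 ≤ Eadd c v₀ v₁ v₂ v₃ σ a b := by
  simp only [Eadd]
  split_ifs <;>
    first
    | positivity
    | exact div_nonneg (mul_nonneg (hnonneg _ _) (hnonneg _ _)) hσ

lemma Eadd_eq (σ : ℝ)
    (hσ : σ = c v₀ v₁ + c v₀ v₂ + c v₀ v₃)
    (hsymm : ∀ v w, c v w = c w v)
    (h12 : v₁ ≠ v₂) (h13 : v₁ ≠ v₃) (h23 : v₂ ≠ v₃)
    (hc1 : 0 < c v₀ v₁) (hc2 : 0 < c v₀ v₂) (hc3 : 0 < c v₀ v₃)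
    (hnbr : ∀ u : V, c v₀ u ≠ 0 → u = v₁ ∨ u = v₂ ∨ u = v₃)
    (a b : V) (hab : a ≠ b) :
    Eadd c v₀ v₁ v₂ v₃ σ a b = c v₀ a * c v₀ b / σ := by
  have key : ∀ u : V, u = v₁ ∨ u = v₂ ∨ u = v₃ ∨ (u ≠ v₁ ∧ u ≠ v₂ ∧ u ≠ v₃ ∧ c v₀ u = 0) := by
    intro u
    by_cases h1 : u = v₁
    · exact Or.inl h1
    by_cases h2 : u = v₂
    · exact Or.inr (Or.inl h2)
    by_cases h3 : u = v₃
    · exact Or.inr (Or.inr (Or.inl h3))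
    refine Or.inr (Or.inr (Or.inr ⟨h1, h2, h3, ?_⟩))
    by_contra hc
    rcases hnbr u hc with h | h | h <;> simp_all
  have h21 : v₂ ≠ v₁ := Ne.symm h12
  have h31 : v₃ ≠ v₁ := Ne.symm h13
  have h32 : v₃ ≠ v₂ := Ne.symm h23
  simp only [Eadd, finset_pair_eq]
  rcases key a with ha | ha | ha | ha <;> rcases key b with hb | hb | hb | hb <;>
    simp_all <;> ring
end YD

section Main
variable {c : V → V → ℝ} {v₀ v₁ v₂ v₃ : V} {σ : ℝ}
variable (hσ : σ = c v₀ v₁ + c v₀ v₂ + c v₀ v₃)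
variable (hsymm : ∀ v w, c v w = c w v)
variable (hnonneg : ∀ v w, 0 ≤ c v w)
variable (hdiag : ∀ v, c v v = 0)
variable (h01 : v₀ ≠ v₁) (h02 : v₀ ≠ v₂) (h03 : v₀ ≠ v₃)
variable (h12 : v₁ ≠ v₂) (h13 : v₁ ≠ v₃) (h23 : v₂ ≠ v₃)
variable (hc1 : 0 < c v₀ v₁) (hc2 : 0 < c v₀ v₂) (hc3 : 0 < c v₀ v₃)
variable (hnbr : ∀ u : V, c v₀ u ≠ 0 → u = v₁ ∨ u = v₂ ∨ u = v₃)

include hσ h12 h13 h23 hnbr in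
lemma sum_row_v₀ : ∑ u, c v₀ u = σ := by
  rw [hσ, ← Finset.sum_subset (Finset.subset_univ ({v₁, v₂, v₃} : Finset V))
    (fun u _ hu => ?_)]
  · rw [Finset.sum_insert (by simp [h12, h13]), Finset.sum_insert (by simp [h23]),
      Finset.sum_singleton]
    ring
  · by_contra hc
    rcases hnbr u hc with h | h | h <;> simp [h] at hu

lemma sum_subtype_ne (g : V → ℝ) :
    ∑ x : {v : V // v ≠ v₀}, g x.1 = (∑ v, g v) - g v₀ := by
  rw [← Finset.sum_subtype (Finset.univ.erase v₀) (fun x => by simp) g]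
  have := Finset.sum_erase_add Finset.univ g (Finset.mem_univ v₀)
  linarith

include hσ hc1 hc2 hc3 in
lemma sigma_pos : 0 < σ := by rw [hσ]; linarith

include hσ hsymm hdiag h12 h13 h23 hc1 hc2 hc3 hnbr in
/-- Part D: entries of the new Laplacian are the Schur complement entries. -/
lemma lapD (c' : {v : V // v ≠ v₀} → {v : V // v ≠ v₀} → ℝ)
    (hc' : ∀ x y, c' x y = c x.1 y.1 + Eadd c v₀ v₁ v₂ v₃ σ x.1 y.1)
    (x y : {v : V // v ≠ v₀}) :
    netLap c' x y = netLap c x.1 y.1 - netLap c x.1 v₀ * netLap c v₀ y.1 / σ := by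
  have hσpos := sigma_pos hσ hc1 hc2 hc3
  have hσne : σ ≠ 0 := ne_of_gt hσpos
  have hEeq := Eadd_eq σ hσ hsymm h12 h13 h23 hc1 hc2 hc3 hnbr
  by_cases hxy : x = y
  · subst hxy
    have hL : netLap c' x x = ∑ u : {v : V // v ≠ v₀}, c' x u := by
      simp [netLap]
    have hsum : ∑ u : {v : V // v ≠ v₀}, c' x u
        = ((∑ u, c x.1 u) - c x.1 v₀) + (c v₀ x.1 * σ / σ - c v₀ x.1 * c v₀ x.1 / σ) := by
      rw [Finset.sum_congr rfl fun u _ => hc' x u, Finset.sum_add_distrib]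
      congr 1
      · exact sum_subtype_ne (fun u => c x.1 u)
      · have hE2 : ∀ u : {v : V // v ≠ v₀},
            Eadd c v₀ v₁ v₂ v₃ σ x.1 u.1
              = c v₀ x.1 * c v₀ u.1 / σ - (if u = x then c v₀ x.1 * c v₀ x.1 / σ else 0) := by
          intro u
          by_cases hux : u = x
          · subst hux
            rw [if_pos rfl, Eadd_diag σ h12 h13 h23]
            ring
          · rw [if_neg hux, hEeq x.1 u.1 (fun h => hux (Subtype.ext h.symm)), sub_zero]
        rw [Finset.sum_congr rfl fun u _ => hE2 u, Finset.sum_sub_distrib,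
          Finset.sum_ite_eq' Finset.univ x fun _ => c v₀ x.1 * c v₀ x.1 / σ]
        simp only [Finset.mem_univ, if_true]
        congr 1
        have hs : ∑ u : {v : V // v ≠ v₀}, c v₀ u.1 = σ := by
          rw [sum_subtype_ne (fun u => c v₀ u), sum_row_v₀ hσ h12 h13 h23 hnbr, hdiag, sub_zero]
        have hs2 : ∑ u : {v : V // v ≠ v₀}, c v₀ x.1 * c v₀ u.1 / σ
            = (∑ u : {v : V // v ≠ v₀}, c v₀ u.1) * (c v₀ x.1 / σ) := by
          rw [Finset.sum_mul]
          exact Finset.sum_congr rfl fun u _ => by ring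
        rw [hs2, hs]
        ring
    have hR1 : netLap c x.1 x.1 = ∑ u, c x.1 u := by simp [netLap]
    have hR2 : netLap c x.1 v₀ = -c x.1 v₀ := by simp [netLap, x.2]
    have hR3 : netLap c v₀ x.1 = -c v₀ x.1 := by
      simp only [netLap, Matrix.of_apply, if_neg (show ¬ v₀ = x.1 from fun h => x.2 h.symm)]
    rw [hL, hsum, hR1, hR2, hR3, hsymm x.1 v₀]
    field_simp
    ring
  · have hvxy : x.1 ≠ y.1 := fun h => hxy (Subtype.ext h)
    have hL : netLap c' x y = -c' x y := by simp [netLap, hxy]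
    have hR1 : netLap c x.1 y.1 = -c x.1 y.1 := by simp [netLap, hvxy]
    have hR2 : netLap c x.1 v₀ = -c x.1 v₀ := by simp [netLap, x.2]
    have hR3 : netLap c v₀ y.1 = -c v₀ y.1 := by
      simp only [netLap, Matrix.of_apply, if_neg (show ¬ v₀ = y.1 from fun h => y.2 h.symm)]
    rw [hL, hR1, hR2, hR3, hc' x y, hEeq x.1 y.1 hvxy, hsymm x.1 v₀]
    ring

include hσ hsymm hdiag h12 h13 h23 hc1 hc2 hc3 hnbr in
/-- Part F3: rows of the new Laplacian acting on a restricted vector. -/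
lemma schur_row (c' : {v : V // v ≠ v₀} → {v : V // v ≠ v₀} → ℝ)
    (hc' : ∀ x y, c' x y = c x.1 y.1 + Eadd c v₀ v₁ v₂ v₃ σ x.1 y.1)
    (w : V → ℝ) (x : {v : V // v ≠ v₀}) :
    (netLap c').mulVec (fun y => w y.1) x
      = (netLap c).mulVec w x.1 - netLap c x.1 v₀ * ((netLap c).mulVec w v₀) / σ := by
  have hσne : σ ≠ 0 := ne_of_gt (sigma_pos hσ hc1 hc2 hc3)
  have hvv : netLap c v₀ v₀ = σ := by
    simp only [netLap, Matrix.of_apply, if_pos rfl]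
    exact sum_row_v₀ hσ h12 h13 h23 hnbr
  have e1 : (netLap c').mulVec (fun y => w y.1) x
      = ∑ y : {v : V // v ≠ v₀}, (netLap c x.1 y.1 - netLap c x.1 v₀ * netLap c v₀ y.1 / σ)
          * w y.1 := by
    simp only [Matrix.mulVec, dotProduct]
    exact Finset.sum_congr rfl fun y _ => by
      rw [lapD hσ hsymm hdiag h12 h13 h23 hc1 hc2 hc3 hnbr c' hc' x y]
  have e2 : ∀ v : V, (netLap c).mulVec w v = ∑ u, netLap c v u * w u := fun v => rfl
  rw [e1, e2, e2]
  have e3 : ∑ y : {v : V // v ≠ v₀}, (netLap c x.1 y.1 - netLap c x.1 v₀ * netLap c v₀ y.1 / σ)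
          * w y.1
      = (∑ y : {v : V // v ≠ v₀}, netLap c x.1 y.1 * w y.1)
        - (netLap c x.1 v₀ / σ) * ∑ y : {v : V // v ≠ v₀}, netLap c v₀ y.1 * w y.1 := by
    rw [Finset.mul_sum, ← Finset.sum_sub_distrib]
    exact Finset.sum_congr rfl fun y _ => by ring
  rw [e3, sum_subtype_ne (fun y => netLap c x.1 y * w y),
    sum_subtype_ne (fun y => netLap c v₀ y * w y), hvv]
  field_simp
  ring
include hσ hsymm hnonneg h01 h12 h13 h23 hc1 hc2 hc3 hnbr in
lemma new_connected
    (hconn : (SimpleGraph.fromRel fun v w : V => c v w ≠ 0).Connected)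
    (c' : {v : V // v ≠ v₀} → {v : V // v ≠ v₀} → ℝ)
    (hc' : ∀ x y, c' x y = c x.1 y.1 + Eadd c v₀ v₁ v₂ v₃ σ x.1 y.1) :
    (SimpleGraph.fromRel fun x y : {v : V // v ≠ v₀} => c' x y ≠ 0).Connected := by
  have hσpos := sigma_pos hσ hc1 hc2 hc3
  have hEeq := Eadd_eq σ hσ hsymm h12 h13 h23 hc1 hc2 hc3 hnbr
  have hne1 : (v₁ : V) ≠ v₀ := Ne.symm h01
  set t₁ : {v : V // v ≠ v₀} := ⟨v₁, hne1⟩ with ht₁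
  have hadj' : ∀ x y : {v : V // v ≠ v₀}, x ≠ y → c x.1 y.1 ≠ 0 →
      (SimpleGraph.fromRel fun x y : {v : V // v ≠ v₀} => c' x y ≠ 0).Adj x y := by
    intro x y hxy hcxy
    rw [SimpleGraph.fromRel_adj]
    refine ⟨hxy, Or.inl ?_⟩
    rw [hc' x y]
    have h1 : 0 < c x.1 y.1 := (hnonneg _ _).lt_of_ne (Ne.symm hcxy)
    have h2 : 0 ≤ Eadd c v₀ v₁ v₂ v₃ σ x.1 y.1 := Eadd_nonneg σ hσpos.le hnonneg _ _
    exact ne_of_gt (by linarith)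
  have htri : ∀ (a y : V) (ha : a ≠ v₀) (hy : y ≠ v₀), c v₀ a ≠ 0 → c v₀ y ≠ 0 → a ≠ y →
      (SimpleGraph.fromRel fun x y : {v : V // v ≠ v₀} => c' x y ≠ 0).Adj ⟨a, ha⟩ ⟨y, hy⟩ := by
    intro a y ha hy hca hcy hay
    rw [SimpleGraph.fromRel_adj]
    refine ⟨by simp [Subtype.ext_iff, hay], Or.inl ?_⟩
    rw [hc' _ _]
    have hE : Eadd c v₀ v₁ v₂ v₃ σ a y = c v₀ a * c v₀ y / σ := hEeq a y hay
    have hpos : 0 < c v₀ a := (hnonneg _ _).lt_of_ne (Ne.symm hca)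
    have hpos2 : 0 < c v₀ y := (hnonneg _ _).lt_of_ne (Ne.symm hcy)
    have h3 : 0 < c v₀ a * c v₀ y / σ := by positivity
    have h4 := hnonneg a y
    rw [hE]
    exact ne_of_gt (by linarith)
  have hcv : ∀ {a b : V}, (SimpleGraph.fromRel fun v w : V => c v w ≠ 0).Adj a b →
      c a b ≠ 0 := by
    intro a b hab
    rcases ((SimpleGraph.fromRel_adj _ a b).mp hab).2 with h' | h'
    · exact h'
    · exact fun hh => h' (by rw [hsymm]; exact hh)
  have aux : ∀ n : ℕ, ∀ {a b : V} (p : (SimpleGraph.fromRel fun v w : V => c v w ≠ 0).Walk a b),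
      p.length = n → ∀ (ha : a ≠ v₀) (hb : b ≠ v₀),
      (SimpleGraph.fromRel fun x y : {v : V // v ≠ v₀} => c' x y ≠ 0).Reachable ⟨a, ha⟩
        ⟨b, hb⟩ := by
    intro n
    induction n using Nat.strong_induction_on with
    | _ n IH =>
      intro a b p hn ha hb
      cases p with
      | nil => exact SimpleGraph.Reachable.refl _
      | @cons _ x _ h q =>
        by_cases hx : v₀ = x
        · subst hx
          cases q with
          | nil => exact absurd rfl hb
          | @cons _ y _ h' q' =>
            have hy : y ≠ v₀ := h'.ne'
            have hca : c v₀ a ≠ 0 := fun hh => hcv h (by rw [hsymm]; exact hh)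
            have hcy : c v₀ y ≠ 0 := hcv h'
            have hr : (SimpleGraph.fromRel fun x y : {v : V // v ≠ v₀} => c' x y ≠ 0).Reachable
                ⟨y, hy⟩ ⟨b, hb⟩ := by
              refine IH q'.length (by simp [← hn, SimpleGraph.Walk.length_cons]) q' rfl hy hb
            by_cases hay : a = y
            · subst hay; exact hr
            · exact ((htri a y ha hy hca hcy hay).reachable).trans hr
        · have hx' : x ≠ v₀ := fun hh => hx hh.symm
          have hr : (SimpleGraph.fromRel fun x y : {v : V // v ≠ v₀} => c' x y ≠ 0).Reachable
              ⟨x, hx'⟩ ⟨b, hb⟩ :=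
            IH q.length (by simp [← hn, SimpleGraph.Walk.length_cons]) q rfl hx' hb
          exact ((hadj' ⟨a, ha⟩ ⟨x, hx'⟩ (by simp [Subtype.ext_iff, h.ne]) (hcv h)).reachable).trans
            hr
  rw [SimpleGraph.connected_iff]
  refine ⟨fun x y => ?_, ⟨t₁⟩⟩
  obtain ⟨p⟩ := hconn.preconnected x.1 y.1
  have := aux p.length p rfl x.2 y.2
  simpa using this
end Main

end YDeltaAux

/-- The Y-Delta transformation preserves the response matrix: if the internal vertex
`v₀` has exactly the three distinct neighbors `v₁, v₂, v₃` with conductances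
`cᵢ = c v₀ vᵢ`, then deleting `v₀` (and its edges) and increasing the conductance
between `vᵢ` and `vⱼ` by `cᵢcⱼ/(c₁+c₂+c₃)` yields a connected network with the same
response matrix on the node set `N`. -/
theorem y_delta_preserves_response {V : Type*} [Fintype V] [DecidableEq V]
    (c : V → V → ℝ) (N : Finset V)
    (hsymm : ∀ v w, c v w = c w v)
    (hnonneg : ∀ v w, 0 ≤ c v w)
    (hdiag : ∀ v, c v v = 0)
    (hconn : (SimpleGraph.fromRel fun v w : V => c v w ≠ 0).Connected)
    (hN : N.Nonempty)
    (v₀ v₁ v₂ v₃ : V) (hv₀ : v₀ ∉ N)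
    (h01 : v₀ ≠ v₁) (h02 : v₀ ≠ v₂) (h03 : v₀ ≠ v₃)
    (h12 : v₁ ≠ v₂) (h13 : v₁ ≠ v₃) (h23 : v₂ ≠ v₃)
    (hc1 : 0 < c v₀ v₁) (hc2 : 0 < c v₀ v₂) (hc3 : 0 < c v₀ v₃)
    (hnbr : ∀ u : V, c v₀ u ≠ 0 → u = v₁ ∨ u = v₂ ∨ u = v₃) :
    let σ : ℝ := c v₀ v₁ + c v₀ v₂ + c v₀ v₃
    let c' : {v : V // v ≠ v₀} → {v : V // v ≠ v₀} → ℝ := fun x y =>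
      c x.val y.val +
        (if ({x.val, y.val} : Finset V) = {v₁, v₂} then c v₀ v₁ * c v₀ v₂ / σ
         else if ({x.val, y.val} : Finset V) = {v₁, v₃} then c v₀ v₁ * c v₀ v₃ / σ
         else if ({x.val, y.val} : Finset V) = {v₂, v₃} then c v₀ v₂ * c v₀ v₃ / σ
         else 0)
    let N' : Finset {v : V // v ≠ v₀} := N.subtype (fun v => v ≠ v₀)
    (SimpleGraph.fromRel fun x y : {v : V // v ≠ v₀} => c' x y ≠ 0).Connected ∧
    ∀ i j : {v : V // v ∈ N},
      respMat c' N'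
        ⟨⟨i.val, fun h => hv₀ (h ▸ i.property)⟩, Finset.mem_subtype.mpr i.property⟩
        ⟨⟨j.val, fun h => hv₀ (h ▸ j.property)⟩, Finset.mem_subtype.mpr j.property⟩
      = respMat c N i j := by
  intro σ c' N'
  have hσ : σ = c v₀ v₁ + c v₀ v₂ + c v₀ v₃ := rfl
  have hc'E : ∀ x y : {v : V // v ≠ v₀}, c' x y = c x.1 y.1 + Eadd c v₀ v₁ v₂ v₃ σ x.1 y.1 :=
    fun x y => rfl
  have hconn' := new_connected hσ hsymm hnonneg h01 h12 h13 h23 hc1 hc2 hc3 hnbr hconn c' hc'E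
  refine ⟨hconn', fun i j => ?_⟩
  have hσpos : 0 < σ := sigma_pos hσ hc1 hc2 hc3
  have hsymm' : ∀ x y, c' x y = c' y x := fun x y => by
    rw [hc'E, hc'E, hsymm x.1 y.1, Eadd_symm]
  have hnonneg' : ∀ x y, 0 ≤ c' x y := fun x y => by
    rw [hc'E]; exact add_nonneg (hnonneg _ _) (Eadd_nonneg σ hσpos.le hnonneg _ _)
  have hdiag' : ∀ x, c' x x = 0 := fun x => by
    rw [hc'E, hdiag, Eadd_diag σ h12 h13 h23, zero_add]
  have hN' : N'.Nonempty := by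
    obtain ⟨n₀, hn₀⟩ := hN
    exact ⟨⟨n₀, fun h => hv₀ (h ▸ hn₀)⟩, Finset.mem_subtype.mpr hn₀⟩
  have hdet := dirichlet_det_ne_zero c N hsymm hnonneg hdiag hconn hN
  have hdet' := dirichlet_det_ne_zero c' N' hsymm' hnonneg' hdiag' hconn' hN'
  obtain ⟨w, hw1, hw2⟩ := exists_harmonic c N hdet j
  have hw2v₀ : (netLap c).mulVec w v₀ = 0 := hw2 v₀ hv₀
  have hrow : ∀ x : {v : V // v ≠ v₀}, (netLap c').mulVec (fun y => w y.1) x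
      = (netLap c).mulVec w x.1 := by
    intro x
    rw [schur_row hσ hsymm hdiag h12 h13 h23 hc1 hc2 hc3 hnbr c' hc'E w x, hw2v₀]
    ring
  have h1' : ∀ (x : {v : V // v ≠ v₀}) (h : x ∈ N'),
      w x.1 = if (⟨x, h⟩ : {x : {v : V // v ≠ v₀} // x ∈ N'})
          = ⟨⟨j.val, fun h => hv₀ (h ▸ j.property)⟩, Finset.mem_subtype.mpr j.property⟩
        then 1 else 0 := by
    intro x hx
    have hxN : x.1 ∈ N := Finset.mem_subtype.mp hx
    rw [hw1 x.1 hxN]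
    simp [Subtype.ext_iff]
  have h2' : ∀ (x : {v : V // v ≠ v₀}) (h : x ∉ N'),
      (netLap c').mulVec (fun y => w y.1) x = 0 := by
    intro x hx
    rw [hrow x]
    exact hw2 x.1 (fun hh => hx (Finset.mem_subtype.mpr hh))
  rw [respMat_apply c' N' hsymm' hdet' _ (fun y : {v : V // v ≠ v₀} => w y.1) h1' h2'
      ⟨⟨i.val, fun h => hv₀ (h ▸ i.property)⟩, Finset.mem_subtype.mpr i.property⟩,
    respMat_apply c N hsymm hdet j w hw1 hw2 i]
  rw [hrow]
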